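/- Fix (c,d) ∈ (−1,1)² with (c,d) ≠ (0,0) and let b > 1. Then there exists exactly one a ∈ S_b such that ψ(a,b,c,d) = 0, where S_b = ((1+2b−b²)/(1+b²), (1+b²)/(1+2b−b²)) if 1 < b < 1+√2 and S_b = (0,∞) if b ≥ 1+√2. -/

import Mathlib

set_option maxHeartbeats 2000000

noncomputable def psi (a b c d : ℝ) : ℝ :=
  (a^2 - 1) * (b^2 + 1) * (a^2*b^2 + a^2 + a*b^2 - a + b^2 + 1) * (c^2 + d^2 - 2*c^2*d^2)
    + a * (b^2 - 1) * (a^2*b^2 + a^2 + 2*a*b^2 - 4*a*b - 2*a + b^2 + 1) * c * d * (c^2 - d^2)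

noncomputable def Sb (b : ℝ) : Set ℝ :=
  if b < 1 + Real.sqrt 2 then
    Set.Ioo ((1 + 2*b - b^2) / (b^2 + 1)) ((b^2 + 1) / (1 + 2*b - b^2))
  else Set.Ioi 0

/-- auxiliary: the coefficient of `Q` in `psi`. -/
noncomputable def Apoly (b a : ℝ) : ℝ :=
  (a^2 - 1) * (b^2 + 1) * (a^2*b^2 + a^2 + a*b^2 - a + b^2 + 1)

/-- auxiliary: the coefficient of `K` in `psi`. -/
noncomputable def Bpoly (b a : ℝ) : ℝ :=
  a * (b^2 - 1) * (a^2*b^2 + a^2 + 2*a*b^2 - 4*a*b - 2*a + b^2 + 1)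

lemma psi_eq (a b c d : ℝ) :
    psi a b c d = Apoly b a * (c^2 + d^2 - 2*c^2*d^2) + Bpoly b a * (c*d*(c^2 - d^2)) := by
  unfold psi Apoly Bpoly; ring

/-- The key monotonicity inequality: the divided difference of `Apoly/Bpoly` is positive
on the slice. -/
lemma Ekey (b x y : ℝ) (hb : 1 < b) (hx : 0 < x) (hxy : x < y)
    (hcase : (1 + 2*b - b^2 ≤ 0) ∨
      (0 < 1 + 2*b - b^2 ∧ (1 + 2*b - b^2)/(b^2+1) < x ∧ y < (b^2+1)/(1 + 2*b - b^2))) :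
    Apoly b x * Bpoly b y < Apoly b y * Bpoly b x := by
  have hy : 0 < y := hx.trans hxy
  have hT : (0:ℝ) < b^2 + 1 := by positivity
  have hM : (0:ℝ) < b^2 - 1 := by nlinarith
  have hbn : (0:ℝ) ≤ b - 1 := by linarith
  have hp : 0 < x*y := mul_pos hx hy
  have hs : 0 < x + y := by linarith
  have hxy1 : (0:ℝ) < 1 + x*y := by linarith
  have hg : (0:ℝ) < 3*b^4 - 4*b^3 - 2*b^2 + 4*b + 3 := by
    have e : 3*b^4 - 4*b^3 - 2*b^2 + 4*b + 3
        = 4 + 4*(b-1)^2 + 8*(b-1)^3 + 3*(b-1)^4 := by ring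
    rw [e]
    have h2 := pow_nonneg hbn 2
    have h3 := pow_nonneg hbn 3
    have h4 := pow_nonneg hbn 4
    linarith
  have main : 0 < (b^2+1)^2*(1+x*y)*((x+y)^2+(x*y)^2-3*(x*y)+1)
      - 2*(b^2+1)*(1+2*b-b^2)*(x+y)*(1+(x*y)^2)
      + (3*b^4-4*b^3-2*b^2+4*b+3)*(x*y)*(1+x*y)
      + 2*(b^2-1)*(b^2+1)*(x*y)*(x+y) := by
    rcases hcase with ht | ⟨ht, hlx, hyh⟩
    · -- case t ≤ 0 : every piece is nonnegative
      have e : (b^2+1)^2*(1+x*y)*((x+y)^2+(x*y)^2-3*(x*y)+1)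
          - 2*(b^2+1)*(1+2*b-b^2)*(x+y)*(1+(x*y)^2)
          + (3*b^4-4*b^3-2*b^2+4*b+3)*(x*y)*(1+x*y)
          + 2*(b^2-1)*(b^2+1)*(x*y)*(x+y)
          = (b^2+1)^2*(1+x*y)*(x-y)^2
            + (b^2+1)^2*(1+x*y)*((x*y)^2+(x*y)+1)
            + (-(2*(b^2+1)*(1+2*b-b^2)))*((x+y)*(1+(x*y)^2))
            + (3*b^4-4*b^3-2*b^2+4*b+3)*((x*y)*(1+x*y))
            + 2*(b^2-1)*(b^2+1)*((x*y)*(x+y)) := by ring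
      rw [e]
      have h1 : 0 ≤ (b^2+1)^2*(1+x*y)*(x-y)^2 :=
        mul_nonneg (mul_nonneg (by positivity) hxy1.le) (sq_nonneg _)
      have h2 : 0 < (b^2+1)^2*(1+x*y)*((x*y)^2+(x*y)+1) := by
        apply mul_pos (mul_pos (by positivity) hxy1); nlinarith [sq_nonneg (x*y)]
      have h3 : 0 ≤ (-(2*(b^2+1)*(1+2*b-b^2)))*((x+y)*(1+(x*y)^2)) := by
        apply mul_nonneg
        · nlinarith
        · exact (mul_pos hs (by positivity)).le
      have h4 : 0 < (3*b^4-4*b^3-2*b^2+4*b+3)*((x*y)*(1+x*y)) :=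
        mul_pos hg (mul_pos hp hxy1)
      have h5 : 0 < 2*(b^2-1)*(b^2+1)*((x*y)*(x+y)) := by
        apply mul_pos (by positivity) (mul_pos hp hs)
      linarith
    · -- case t > 0 with the box constraints
      have htx : 1 + 2*b - b^2 < (b^2+1)*x := by
        rw [div_lt_iff₀ hT] at hlx; linarith
      have hty : 1 + 2*b - b^2 < (b^2+1)*y := by nlinarith [mul_lt_mul_of_pos_left hxy hT]
      have hyt : (1 + 2*b - b^2)*y < b^2+1 := by
        rw [lt_div_iff₀ ht] at hyh; linarith
      have hxt : (1 + 2*b - b^2)*x < b^2+1 := by nlinarith [mul_lt_mul_of_pos_left hxy ht]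
      have hU : 0 < ((b^2+1)*x - (1+2*b-b^2)) * ((b^2+1)*y - (1+2*b-b^2)) :=
        mul_pos (by linarith) (by linarith)
      have hV : 0 < ((b^2+1) - (1+2*b-b^2)*x) * ((b^2+1) - (1+2*b-b^2)*y) :=
        mul_pos (by linarith) (by linarith)
      have hu : 0 < (b^2+1)^2*(x*y) - (1+2*b-b^2)^2 := by
        nlinarith [mul_lt_mul'' htx hty ht.le ht.le]
      have hv : 0 < (b^2+1)^2 - (1+2*b-b^2)^2*(x*y) := by
        nlinarith [mul_lt_mul'' hxt hyt (mul_nonneg ht.le hx.le) (mul_nonneg ht.le hy.le)]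
      have hW : (0:ℝ) ≤ (3*b^4-4*b^3-2*b^2+4*b+3)*(b^2+1)^2 - (1+2*b-b^2)^4 := by
        have e : (3*b^4-4*b^3-2*b^2+4*b+3)*(b^2+1)^2 - (1+2*b-b^2)^4
            = 32*(b-1) + 80*(b-1)^2 + 80*(b-1)^3 + 88*(b-1)^4 + 104*(b-1)^5
              + 68*(b-1)^6 + 20*(b-1)^7 + 2*(b-1)^8 := by ring
        rw [e]
        have h2 := pow_nonneg hbn 2
        have h3 := pow_nonneg hbn 3
        have h4 := pow_nonneg hbn 4
        have h5 := pow_nonneg hbn 5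
        have h6 := pow_nonneg hbn 6
        have h7 := pow_nonneg hbn 7
        have h8 := pow_nonneg hbn 8
        linarith
      have hdec : (b^2+1)^2 * ((b^2+1)^2*(1+x*y)*((x+y)^2+(x*y)^2-3*(x*y)+1)
            - 2*(b^2+1)*(1+2*b-b^2)*(x+y)*(1+(x*y)^2)
            + (3*b^4-4*b^3-2*b^2+4*b+3)*(x*y)*(1+x*y)
            + 2*(b^2-1)*(b^2+1)*(x*y)*(x+y))
          = (b^2+1)^4*(1+x*y)*(x-y)^2
            + (b^2+1)^2*(1+(x*y)^2)*
              ( ((b^2+1)*x - (1+2*b-b^2)) * ((b^2+1)*y - (1+2*b-b^2))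
                + ((b^2+1) - (1+2*b-b^2)*x) * ((b^2+1) - (1+2*b-b^2)*y) )
            + (1+x*y)*( ((b^2+1)^2*(x*y) - (1+2*b-b^2)^2)
                          * ((b^2+1)^2 - (1+2*b-b^2)^2*(x*y))
                + (x*y)*((3*b^4-4*b^3-2*b^2+4*b+3)*(b^2+1)^2 - (1+2*b-b^2)^4) )
            + 2*(b^2-1)*(b^2+1)^3*((x*y)*(x+y)) := by ring
      have hbig : 0 < (b^2+1)^2 * ((b^2+1)^2*(1+x*y)*((x+y)^2+(x*y)^2-3*(x*y)+1)
            - 2*(b^2+1)*(1+2*b-b^2)*(x+y)*(1+(x*y)^2)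
            + (3*b^4-4*b^3-2*b^2+4*b+3)*(x*y)*(1+x*y)
            + 2*(b^2-1)*(b^2+1)*(x*y)*(x+y)) := by
        rw [hdec]
        have h1 : 0 ≤ (b^2+1)^4*(1+x*y)*(x-y)^2 :=
          mul_nonneg (mul_nonneg (by positivity) hxy1.le) (sq_nonneg _)
        have h2 : 0 ≤ (b^2+1)^2*(1+(x*y)^2)*
              ( ((b^2+1)*x - (1+2*b-b^2)) * ((b^2+1)*y - (1+2*b-b^2))
                + ((b^2+1) - (1+2*b-b^2)*x) * ((b^2+1) - (1+2*b-b^2)*y) ) := by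
          apply mul_nonneg (by positivity); linarith
        have h3 : 0 ≤ (1+x*y)*( ((b^2+1)^2*(x*y) - (1+2*b-b^2)^2)
                          * ((b^2+1)^2 - (1+2*b-b^2)^2*(x*y))
                + (x*y)*((3*b^4-4*b^3-2*b^2+4*b+3)*(b^2+1)^2 - (1+2*b-b^2)^4) ) := by
          apply mul_nonneg hxy1.le
          have := mul_nonneg hp.le hW
          nlinarith [mul_pos hu hv]
        have h4 : 0 < 2*(b^2-1)*(b^2+1)^3*((x*y)*(x+y)) :=
          mul_pos (by positivity) (mul_pos hp hs)
        linarith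
      nlinarith [hbig, sq_nonneg (b^2+1)]
  have key : Apoly b y * Bpoly b x - Apoly b x * Bpoly b y
      = (y - x) * ((b^2-1)*(b^2+1)) *
        ((b^2+1)^2*(1+x*y)*((x+y)^2+(x*y)^2-3*(x*y)+1)
          - 2*(b^2+1)*(1+2*b-b^2)*(x+y)*(1+(x*y)^2)
          + (3*b^4-4*b^3-2*b^2+4*b+3)*(x*y)*(1+x*y)
          + 2*(b^2-1)*(b^2+1)*(x*y)*(x+y)) := by
    unfold Apoly Bpoly; ring
  have hpos : 0 < (y - x) * ((b^2-1)*(b^2+1)) *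
        ((b^2+1)^2*(1+x*y)*((x+y)^2+(x*y)^2-3*(x*y)+1)
          - 2*(b^2+1)*(1+2*b-b^2)*(x+y)*(1+(x*y)^2)
          + (3*b^4-4*b^3-2*b^2+4*b+3)*(x*y)*(1+x*y)
          + 2*(b^2-1)*(b^2+1)*(x*y)*(x+y)) :=
    mul_pos (mul_pos (sub_pos.mpr hxy) (mul_pos hM hT)) main
  linarith [key, hpos]

/-- two roots of `A·Q + B·K` with the strict divided-difference inequality are impossible -/
lemma root_lt_absurd (b x y Q K : ℝ) (hQ : 0 < Q)
    (hx0 : Apoly b x * Q + Bpoly b x * K = 0)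
    (hy0 : Apoly b y * Q + Bpoly b y * K = 0)
    (hE : Apoly b x * Bpoly b y < Apoly b y * Bpoly b x) : False := by
  have h : (Apoly b y * Bpoly b x - Apoly b x * Bpoly b y) * Q = 0 := by
    linear_combination Bpoly b x * hy0 - Bpoly b y * hx0
  rcases mul_eq_zero.mp h with h' | h'
  · linarith
  · exact absurd h' hQ.ne'

theorem unique_zero_in_slice (b c d : ℝ)
    (hc : c ∈ Set.Ioo (-1 : ℝ) 1) (hd : d ∈ Set.Ioo (-1 : ℝ) 1)
    (hcd : (c, d) ≠ (0, 0)) (hb : 1 < b) :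
    ∃! a : ℝ, a ∈ Sb b ∧ psi a b c d = 0 := by
  obtain ⟨hc1, hc2⟩ := hc
  obtain ⟨hd1, hd2⟩ := hd
  have hc2' : c^2 < 1 := by nlinarith
  have hd2' : d^2 < 1 := by nlinarith
  have hT : (0:ℝ) < b^2 + 1 := by positivity
  have hM : (0:ℝ) < b^2 - 1 := by nlinarith
  -- positivity of Q
  have hQ : 0 < c^2 + d^2 - 2*c^2*d^2 := by
    have hor : c ≠ 0 ∨ d ≠ 0 := by
      by_contra h
      push_neg at h
      exact hcd (by rw [h.1, h.2])
    rcases hor with h0 | h0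
    · have h1 : 0 < c^2 := lt_of_le_of_ne (sq_nonneg c) (Ne.symm (pow_ne_zero 2 h0))
      nlinarith [sq_nonneg d]
    · have h1 : 0 < d^2 := lt_of_le_of_ne (sq_nonneg d) (Ne.symm (pow_ne_zero 2 h0))
      nlinarith [sq_nonneg c]
  -- |K| < Q
  have h1cd : (0:ℝ) < 1 - c^2*d^2 := by
    nlinarith [mul_nonneg (sq_nonneg c) (by linarith : (0:ℝ) ≤ 1 - d^2)]
  have hK2 : (c*d*(c^2 - d^2))^2 < (c^2 + d^2 - 2*c^2*d^2)^2 := by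
    have e : (c^2 + d^2 - 2*c^2*d^2)^2 - (c*d*(c^2 - d^2))^2
        = (1 - c^2*d^2)*(c^2 + d^2 - 2*c^2*d^2)^2 + 4*c^4*d^4*(1-c^2)*(1-d^2) := by ring
    have h1 : 0 < (1 - c^2*d^2)*(c^2 + d^2 - 2*c^2*d^2)^2 := mul_pos h1cd (pow_pos hQ 2)
    have h2 : (0:ℝ) ≤ 4*c^4*d^4*(1-c^2)*(1-d^2) :=
      mul_nonneg (mul_nonneg (by positivity) (by linarith)) (by linarith)
    linarith
  have hKQ1 : c*d*(c^2 - d^2) < c^2 + d^2 - 2*c^2*d^2 := by nlinarith [hK2, hQ]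
  have hKQ2 : -(c^2 + d^2 - 2*c^2*d^2) < c*d*(c^2 - d^2) := by nlinarith [hK2, hQ]
  have hcont : Continuous fun a : ℝ => psi a b c d := by
    unfold psi; fun_prop
  by_cases hsb : b < 1 + Real.sqrt 2
  · -- case 1 < b < 1 + √2 : the slice is a bounded interval
    have ht : 0 < 1 + 2*b - b^2 := by
      have h1 : b - 1 < Real.sqrt 2 := by linarith
      have h2 : (b-1)^2 < (Real.sqrt 2)^2 := by
        apply pow_lt_pow_left₀ h1 (by linarith) (by norm_num)
      rw [Real.sq_sqrt (by norm_num : (0:ℝ) ≤ 2)] at h2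
      nlinarith
    have hSb : Sb b = Set.Ioo ((1 + 2*b - b^2) / (b^2 + 1)) ((b^2 + 1) / (1 + 2*b - b^2)) := by
      rw [Sb, if_pos hsb]
    have hlopos : 0 < (1 + 2*b - b^2) / (b^2 + 1) := div_pos ht hT
    have htT : 1 + 2*b - b^2 < b^2 + 1 := by nlinarith
    have hTt2 : 0 < (b^2+1)^2 - (1+2*b-b^2)^2 := by nlinarith
    have hlohi : (1 + 2*b - b^2) / (b^2 + 1) < (b^2 + 1) / (1 + 2*b - b^2) := by
      rw [div_lt_div_iff₀ hT ht]; nlinarith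
    -- sign of psi at the left endpoint
    have hBlo : 0 < Bpoly b ((1 + 2*b - b^2) / (b^2 + 1)) := by
      have e : Bpoly b ((1 + 2*b - b^2) / (b^2 + 1))
          = (b^2-1)*(1+2*b-b^2)*((b^2+1)^2-(1+2*b-b^2)^2)/(b^2+1)^2 := by
        unfold Bpoly; field_simp; ring
      rw [e]
      exact div_pos (mul_pos (mul_pos hM ht) hTt2) (by positivity)
    have hABlo : Apoly b ((1 + 2*b - b^2) / (b^2 + 1))
        + Bpoly b ((1 + 2*b - b^2) / (b^2 + 1)) < 0 := by
      have e : Apoly b ((1 + 2*b - b^2) / (b^2 + 1))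
            + Bpoly b ((1 + 2*b - b^2) / (b^2 + 1))
          = -(((b^2+1)^2-(1+2*b-b^2)^2)*((b^2+1)^2+(1+2*b-b^2)^2))/(b^2+1)^2 := by
        unfold Apoly Bpoly; field_simp; ring
      rw [e]
      apply div_neg_of_neg_of_pos _ (by positivity)
      have h1 : 0 < ((b^2+1)^2-(1+2*b-b^2)^2)*((b^2+1)^2+(1+2*b-b^2)^2) :=
        mul_pos hTt2 (by positivity)
      linarith
    have hpsilo : psi ((1 + 2*b - b^2) / (b^2 + 1)) b c d < 0 := by
      rw [psi_eq]
      have split : Apoly b ((1 + 2*b - b^2) / (b^2 + 1)) * (c^2 + d^2 - 2*c^2*d^2)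
            + Bpoly b ((1 + 2*b - b^2) / (b^2 + 1)) * (c*d*(c^2 - d^2))
          = (Apoly b ((1 + 2*b - b^2) / (b^2 + 1))
              + Bpoly b ((1 + 2*b - b^2) / (b^2 + 1))) * (c^2 + d^2 - 2*c^2*d^2)
            + Bpoly b ((1 + 2*b - b^2) / (b^2 + 1))
              * ((c*d*(c^2 - d^2)) - (c^2 + d^2 - 2*c^2*d^2)) := by ring
      rw [split]
      have h1 := mul_neg_of_neg_of_pos hABlo hQ
      have h2 := mul_neg_of_pos_of_neg hBlo (by linarith :
        (c*d*(c^2 - d^2)) - (c^2 + d^2 - 2*c^2*d^2) < 0)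
      linarith
    -- sign of psi at the right endpoint
    have hBhi : 0 < Bpoly b ((b^2 + 1) / (1 + 2*b - b^2)) := by
      have e : Bpoly b ((b^2 + 1) / (1 + 2*b - b^2))
          = (b^2-1)*(b^2+1)^2*((b^2+1)^2-(1+2*b-b^2)^2)/(1+2*b-b^2)^3 := by
        unfold Bpoly
        have ht0 : 1 + 2*b - b^2 ≠ 0 := ht.ne'
        generalize htd : 1 + 2*b - b^2 = t at ht0 ⊢
        field_simp
        rw [← htd]; ring
      rw [e]
      exact div_pos (mul_pos (mul_pos hM (by positivity)) hTt2) (by positivity)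
    have hABhi : 0 < Apoly b ((b^2 + 1) / (1 + 2*b - b^2))
        - Bpoly b ((b^2 + 1) / (1 + 2*b - b^2)) := by
      have e : Apoly b ((b^2 + 1) / (1 + 2*b - b^2))
            - Bpoly b ((b^2 + 1) / (1 + 2*b - b^2))
          = (b^2+1)^2*((b^2+1)^2-(1+2*b-b^2)^2)*((b^2+1)^2+(1+2*b-b^2)^2)
              /(1+2*b-b^2)^4 := by
        unfold Apoly Bpoly
        have ht0 : 1 + 2*b - b^2 ≠ 0 := ht.ne'
        generalize htd : 1 + 2*b - b^2 = t at ht0 ⊢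
        field_simp
        rw [← htd]; ring
      rw [e]
      exact div_pos (mul_pos (mul_pos (by positivity) hTt2) (by positivity)) (by positivity)
    have hpsihi : 0 < psi ((b^2 + 1) / (1 + 2*b - b^2)) b c d := by
      rw [psi_eq]
      have split : Apoly b ((b^2 + 1) / (1 + 2*b - b^2)) * (c^2 + d^2 - 2*c^2*d^2)
            + Bpoly b ((b^2 + 1) / (1 + 2*b - b^2)) * (c*d*(c^2 - d^2))
          = (Apoly b ((b^2 + 1) / (1 + 2*b - b^2))
              - Bpoly b ((b^2 + 1) / (1 + 2*b - b^2))) * (c^2 + d^2 - 2*c^2*d^2)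
            + Bpoly b ((b^2 + 1) / (1 + 2*b - b^2))
              * ((c*d*(c^2 - d^2)) + (c^2 + d^2 - 2*c^2*d^2)) := by ring
      rw [split]
      have h1 := mul_pos hABhi hQ
      have h2 := mul_pos hBhi (by linarith :
        0 < (c*d*(c^2 - d^2)) + (c^2 + d^2 - 2*c^2*d^2))
      linarith
    -- existence by the intermediate value theorem
    obtain ⟨a₀, ha₀mem, ha₀zero⟩ :=
      intermediate_value_Ioo hlohi.le (hcont.continuousOn)
        (Set.mem_Ioo.mpr ⟨hpsilo, hpsihi⟩)
    refine ⟨a₀, ⟨by rw [hSb]; exact ha₀mem, ha₀zero⟩, ?_⟩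
    rintro y ⟨hymem, hyzero⟩
    rw [hSb] at hymem
    -- uniqueness via Ekey
    by_contra hne
    have ha₀zero' : Apoly b a₀ * (c^2 + d^2 - 2*c^2*d^2)
        + Bpoly b a₀ * (c*d*(c^2 - d^2)) = 0 := by rw [← psi_eq]; exact ha₀zero
    have hyzero' : Apoly b y * (c^2 + d^2 - 2*c^2*d^2)
        + Bpoly b y * (c*d*(c^2 - d^2)) = 0 := by rw [← psi_eq]; exact hyzero
    rcases Ne.lt_or_gt hne with h | h
    · exact root_lt_absurd b y a₀ _ _ hQ hyzero' ha₀zero'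
        (Ekey b y a₀ hb (lt_trans hlopos hymem.1) h
          (Or.inr ⟨ht, hymem.1, ha₀mem.2⟩))
    · exact root_lt_absurd b a₀ y _ _ hQ ha₀zero' hyzero'
        (Ekey b a₀ y hb (lt_trans hlopos ha₀mem.1) h
          (Or.inr ⟨ht, ha₀mem.1, hymem.2⟩))
  · -- case b ≥ 1 + √2 : the slice is (0, ∞)
    have ht : 1 + 2*b - b^2 ≤ 0 := by
      push_neg at hsb
      have h1 : Real.sqrt 2 ≤ b - 1 := by linarith
      have h2 : (Real.sqrt 2)^2 ≤ (b-1)^2 :=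
        pow_le_pow_left₀ (Real.sqrt_nonneg 2) h1 2
      rw [Real.sq_sqrt (by norm_num : (0:ℝ) ≤ 2)] at h2
      nlinarith
    have hSb : Sb b = Set.Ioi 0 := by rw [Sb, if_neg hsb]
    have hbn : (0:ℝ) ≤ b - 1 := by linarith
    -- psi is negative at 0
    have hpsi0 : psi 0 b c d < 0 := by
      have e : psi 0 b c d = -((b^2+1)^2 * (c^2 + d^2 - 2*c^2*d^2)) := by
        unfold psi; ring
      rw [e]
      have := mul_pos (by positivity : (0:ℝ) < (b^2+1)^2) hQ
      linarith
    -- psi is positive at b^2+1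
    have hABT : 0 < Apoly b (b^2+1) - Bpoly b (b^2+1) := by
      have e : Apoly b (b^2+1) - Bpoly b (b^2+1)
          = 60 + 392*(b-1) + 1184*(b-1)^2 + 2268*(b-1)^3 + 3111*(b-1)^4
            + 3228*(b-1)^5 + 2594*(b-1)^6 + 1620*(b-1)^7 + 778*(b-1)^8
            + 280*(b-1)^9 + 72*(b-1)^10 + 12*(b-1)^11 + (b-1)^12 := by
        unfold Apoly Bpoly; ring
      rw [e]
      have h2 := pow_nonneg hbn 2
      have h3 := pow_nonneg hbn 3
      have h4 := pow_nonneg hbn 4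
      have h5 := pow_nonneg hbn 5
      have h6 := pow_nonneg hbn 6
      have h7 := pow_nonneg hbn 7
      have h8 := pow_nonneg hbn 8
      have h9 := pow_nonneg hbn 9
      have h10 := pow_nonneg hbn 10
      have h11 := pow_nonneg hbn 11
      have h12 := pow_nonneg hbn 12
      linarith
    have hBT : 0 < Bpoly b (b^2+1) := by
      have e : Bpoly b (b^2+1)
          = 8*(b-1) + 84*(b-1)^2 + 264*(b-1)^3 + 440*(b-1)^4 + 462*(b-1)^5
            + 325*(b-1)^6 + 156*(b-1)^7 + 50*(b-1)^8 + 10*(b-1)^9 + (b-1)^10 := by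
        unfold Bpoly; ring
      rw [e]
      have h1 : (0:ℝ) < b - 1 := by linarith
      have h2 := pow_nonneg hbn 2
      have h3 := pow_nonneg hbn 3
      have h4 := pow_nonneg hbn 4
      have h5 := pow_nonneg hbn 5
      have h6 := pow_nonneg hbn 6
      have h7 := pow_nonneg hbn 7
      have h8 := pow_nonneg hbn 8
      have h9 := pow_nonneg hbn 9
      have h10 := pow_nonneg hbn 10
      linarith
    have hpsiT : 0 < psi (b^2+1) b c d := by
      rw [psi_eq]
      have split : Apoly b (b^2+1) * (c^2 + d^2 - 2*c^2*d^2)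
            + Bpoly b (b^2+1) * (c*d*(c^2 - d^2))
          = (Apoly b (b^2+1) - Bpoly b (b^2+1)) * (c^2 + d^2 - 2*c^2*d^2)
            + Bpoly b (b^2+1) * ((c*d*(c^2 - d^2)) + (c^2 + d^2 - 2*c^2*d^2)) := by ring
      rw [split]
      have h1 := mul_pos hABT hQ
      have h2 := mul_pos hBT (by linarith :
        0 < (c*d*(c^2 - d^2)) + (c^2 + d^2 - 2*c^2*d^2))
      linarith
    obtain ⟨a₀, ha₀mem, ha₀zero⟩ :=
      intermediate_value_Ioo (by positivity : (0:ℝ) ≤ b^2+1) (hcont.continuousOn)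
        (Set.mem_Ioo.mpr ⟨hpsi0, hpsiT⟩)
    refine ⟨a₀, ⟨by rw [hSb]; exact ha₀mem.1, ha₀zero⟩, ?_⟩
    rintro y ⟨hymem, hyzero⟩
    rw [hSb] at hymem
    by_contra hne
    have ha₀zero' : Apoly b a₀ * (c^2 + d^2 - 2*c^2*d^2)
        + Bpoly b a₀ * (c*d*(c^2 - d^2)) = 0 := by rw [← psi_eq]; exact ha₀zero
    have hyzero' : Apoly b y * (c^2 + d^2 - 2*c^2*d^2)
        + Bpoly b y * (c*d*(c^2 - d^2)) = 0 := by rw [← psi_eq]; exact hyzero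
    rcases Ne.lt_or_gt hne with h | h
    · exact root_lt_absurd b y a₀ _ _ hQ hyzero' ha₀zero'
        (Ekey b y a₀ hb hymem h (Or.inl ht))
    · exact root_lt_absurd b a₀ y _ _ hQ ha₀zero' hyzero'
        (Ekey b a₀ y hb ha₀mem.1 h (Or.inl ht))
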